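/- Consider the one-sided master-item minimisation problem where the order sizes satisfy successive divisibility: w_{j+1} divides w_j for all j. Then the integer round-up property holds: the minimum integer number of master items equals ⌈z_LP⌉, where z_LP is the LP relaxation optimum. -/

import Mathlib

open Finset

lemma distribute {ι : Type*} [DecidableEq ι] (s : Finset ι) (f : ι → ℕ) :
    ∀ n : ℕ, n ≤ ∑ i ∈ s, f i → ∃ g : ι → ℕ, (∀ i, g i ≤ f i) ∧ ∑ i ∈ s, g i = n := by
  induction s using Finset.induction_on with
  | empty =>
    intro n h
    simp only [sum_empty, Nat.le_zero] at h
    exact ⟨fun _ => 0, fun _ => Nat.zero_le _, by simp [h]⟩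
  | insert _ _ ha ih =>
    rename_i a s
    intro n h
    rw [sum_insert ha] at h
    obtain ⟨g, hg, hsum⟩ := ih (n - min n (f a)) (by omega)
    refine ⟨fun i => if i = a then min n (f a) else g i, fun i => ?_, ?_⟩
    · by_cases hi : i = a <;> simp [hi, hg i, min_le_right]
    · rw [sum_insert ha, if_pos rfl]
      have : ∑ i ∈ s, (if i = a then min n (f a) else g i) = ∑ i ∈ s, g i :=
        Finset.sum_congr rfl fun i hi => by
          have : i ≠ a := fun e => ha (e ▸ hi); simp [this]
      rw [this, hsum]; omega

lemma pack (m W N : ℕ) (w q : Fin m → ℕ) (hpos : ∀ j, 0 < w j)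
    (hchain : ∀ j k : Fin m, j ≤ k → w k ∣ w j)
    (hcap : ∀ t : Fin m, ∑ k ∈ univ.filter (· ≤ t), q k * w k ≤ N * (w t * (W / w t))) :
    ∃ A : Fin N → Fin m → ℕ, (∀ i, ∑ k, A i k * w k ≤ W) ∧ (∀ k, ∑ i, A i k = q k) := by
  have main : ∀ t : ℕ, t ≤ m → ∃ A : Fin N → Fin m → ℕ,
      (∀ i, ∑ k, A i k * w k ≤ W) ∧ (∀ k : Fin m, (k : ℕ) < t → ∑ i, A i k = q k) ∧
      (∀ k : Fin m, t ≤ (k : ℕ) → ∀ i, A i k = 0) := by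
    intro t
    induction t with
    | zero =>
      intro _
      exact ⟨fun _ _ => 0, fun i => by simp, fun k hk => by omega, fun k _ i => rfl⟩
    | succ t iht =>
      intro ht1
      obtain ⟨A, hload, hdone, hzero⟩ := iht (by omega)
      have ht : t < m := ht1
      set T : Fin m := ⟨t, ht⟩ with hT
      set L : Fin N → ℕ := fun i => ∑ k, A i k * w k with hL
      have hdvd : ∀ i, w T ∣ L i := by
        intro i
        apply Finset.dvd_sum
        intro k _
        by_cases hk : (k : ℕ) < t
        · exact Dvd.dvd.mul_left (hchain k T (by exact Nat.le_of_lt hk)) _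
        · rw [hzero k (by omega) i]; simp
      have hLW : ∀ i, L i ≤ W := hload
      have hdivle : ∀ i, L i / w T ≤ W / w T := fun i => Nat.div_le_div_right (hLW i)
      -- total load
      have sumL : ∑ i, L i = ∑ k ∈ univ.filter (fun k : Fin m => (k : ℕ) < t), q k * w k := by
        rw [hL, Finset.sum_comm]
        rw [Finset.sum_filter]
        apply Finset.sum_congr rfl
        intro k _
        by_cases hk : (k : ℕ) < t
        · rw [if_pos hk, ← Finset.sum_mul, hdone k hk]
        · rw [if_neg hk]
          apply Finset.sum_eq_zero
          intro i _
          rw [hzero k (by omega) i, zero_mul]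
      have hsplit : (univ : Finset (Fin m)).filter (· ≤ T) =
          insert T (univ.filter (fun k : Fin m => (k : ℕ) < t)) := by
        ext k
        simp only [mem_filter, mem_univ, true_and, mem_insert, Fin.le_def, Fin.ext_iff, hT, Fin.val_mk]
        omega
      have hTnot : T ∉ univ.filter (fun k : Fin m => (k : ℕ) < t) := by simp [hT]
      have hcapT := hcap T
      rw [hsplit, Finset.sum_insert hTnot] at hcapT
      -- key inequality
      have key : q T + ∑ i, L i / w T ≤ N * (W / w T) := by
        have hwpos := hpos T
        have h1 : (q T + ∑ i, L i / w T) * w T = q T * w T + ∑ i, L i := by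
          rw [add_mul, Finset.sum_mul]
          congr 1
          apply Finset.sum_congr rfl
          intro i _
          exact Nat.div_mul_cancel (hdvd i)
        have h2 : q T * w T + ∑ i, L i ≤ (N * (W / w T)) * w T := by
          rw [sumL]
          calc q T * w T + ∑ k ∈ univ.filter (fun k : Fin m => (k : ℕ) < t), q k * w k
              ≤ N * (w T * (W / w T)) := hcapT
            _ = (N * (W / w T)) * w T := by ring
        have := h1 ▸ h2
        exact Nat.le_of_mul_le_mul_right this hwpos
      set c : Fin N → ℕ := fun i => W / w T - L i / w T with hc
      have hsumc : q T ≤ ∑ i, c i := by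
        have h3 : ∑ i : Fin N, (c i + L i / w T) = N * (W / w T) := by
          have : ∀ i : Fin N, c i + L i / w T = W / w T := fun i => by
            have := hdivle i; simp only [hc]; omega
          simp [this, Finset.sum_const, mul_comm]
        have h4 : ∑ i : Fin N, (c i + L i / w T) = ∑ i, c i + ∑ i, L i / w T :=
          Finset.sum_add_distrib
        omega
      obtain ⟨g, hg, hgsum⟩ := distribute univ c (q T) hsumc
      refine ⟨fun i k => if k = T then g i else A i k, ?_, ?_, ?_⟩
      · intro i
        have hAT : A i T = 0 := hzero T (le_refl t) i
        have hsum : ∑ k, (if k = T then g i else A i k) * w k = L i + g i * w T := by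
          have : ∀ k : Fin m, (if k = T then g i else A i k) * w k
              = A i k * w k + (if k = T then g i * w T else 0) := by
            intro k
            by_cases hk : k = T
            · subst hk; simp [hAT]
            · simp [hk]
          rw [Finset.sum_congr rfl (fun k _ => this k), Finset.sum_add_distrib,
            Finset.sum_ite_eq' univ T (fun _ => g i * w T), if_pos (mem_univ T)]
        rw [hsum]
        have h5 : g i * w T ≤ c i * w T := Nat.mul_le_mul_right _ (hg i)
        have h6 : L i + c i * w T ≤ W := by
          have hLi : L i = (L i / w T) * w T := (Nat.div_mul_cancel (hdvd i)).symm
          calc L i + c i * w T = (L i / w T + c i) * w T := by rw [add_mul, ← hLi]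
            _ = (W / w T) * w T := by
                congr 1; have := hdivle i; simp only [hc]; omega
            _ ≤ W := Nat.div_mul_le_self W (w T)
        omega
      · intro k hk
        by_cases hkT : k = T
        · subst hkT; simpa using hgsum
        · have : (k : ℕ) < t := by
            rcases Nat.lt_succ_iff_lt_or_eq.mp hk with h | h
            · exact h
            · exact absurd (Fin.ext h) hkT
          simp only [if_neg hkT]
          exact hdone k this
      · intro k hk i
        have hkT : k ≠ T := by
          intro e; rw [e] at hk; simp [hT] at hk
        simp only [if_neg hkT]
        exact hzero k (by omega) i
  obtain ⟨A, h1, h2, _⟩ := main m (le_refl m)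
  exact ⟨A, h1, fun k => h2 k k.isLt⟩



/-- Marcotte's divisibility theorem: for a one-sided instance whose
sizes are decreasing, positive, fit in the master, and satisfy successive
divisibility (w_{j+1} ∣ w_j), the integer round-up property holds: the integer
optimum of the master-item minimisation problem equals ⌈z_LP⌉. -/
theorem stmt16 (m W : ℕ) (w q : Fin m → ℕ)
    (hpos : ∀ j, 0 < w j) (hle : ∀ j, w j ≤ W)
    (hdec : ∀ j k : Fin m, j < k → w k < w j)
    (hdiv : ∀ (j : ℕ) (h : j + 1 < m), w ⟨j + 1, h⟩ ∣ w ⟨j, Nat.lt_of_succ_lt h⟩)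
    (hq : ∀ j, 0 < q j)
    (zLP : ℝ) (zstar : ℕ)
    (hLP : IsLeast {z : ℝ | ∃ x : (Fin m → ℕ) →₀ ℝ,
      (∀ a ∈ x.support, ∑ j, a j * w j ≤ W) ∧
      (∀ a, 0 ≤ x a) ∧
      (∀ j, (q j : ℝ) ≤ x.sum (fun a c => c * (a j : ℝ))) ∧
      x.sum (fun _ c => c) = z} zLP)
    (hInt : IsLeast {n : ℕ | ∃ x : (Fin m → ℕ) →₀ ℕ,
      (∀ a ∈ x.support, ∑ j, a j * w j ≤ W) ∧
      (∀ j, q j ≤ x.sum (fun a c => c * a j)) ∧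
      x.sum (fun _ c => c) = n} zstar) :
    (zstar : ℤ) = ⌈zLP⌉ := by
  -- divisibility chain
  have hchain : ∀ j k : Fin m, j ≤ k → w k ∣ w j := by
    have key : ∀ (d j : ℕ) (h : j + d < m), w ⟨j + d, h⟩ ∣ w ⟨j, by omega⟩ := by
      intro d
      induction d with
      | zero => intro j h; exact dvd_refl _
      | succ d ih =>
        intro j h
        exact dvd_trans (hdiv (j + d) h) (ih j (by omega))
    intro j k hjk
    have hk : k = ⟨(j : ℕ) + ((k : ℕ) - (j : ℕ)), by omega⟩ := Fin.ext (by simp; omega)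
    rw [hk]
    exact key _ _ _
  -- direction 1 : ⌈zLP⌉ ≤ zstar
  obtain ⟨y, hy1, hy2, hy3⟩ := hInt.1
  have hdir1 : ⌈zLP⌉ ≤ (zstar : ℤ) := by
    have hmem : ((zstar : ℕ) : ℝ) ∈ {z : ℝ | ∃ x : (Fin m → ℕ) →₀ ℝ,
        (∀ a ∈ x.support, ∑ j, a j * w j ≤ W) ∧
        (∀ a, 0 ≤ x a) ∧
        (∀ j, (q j : ℝ) ≤ x.sum (fun a c => c * (a j : ℝ))) ∧
        x.sum (fun _ c => c) = z} := by
      refine ⟨Finsupp.mapRange (fun n : ℕ => (n : ℝ)) (by simp) y, ?_, ?_, ?_, ?_⟩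
      · intro a ha
        exact hy1 a (Finsupp.support_mapRange ha)
      · intro a
        simp [Finsupp.mapRange_apply]
      · intro j
        rw [Finsupp.sum_mapRange_index (by simp)]
        have := hy2 j
        calc (q j : ℝ) ≤ ((y.sum fun a c => c * a j : ℕ) : ℝ) := by exact_mod_cast this
          _ = y.sum fun a b => (b : ℝ) * (a j : ℝ) := by
              rw [Finsupp.sum, Finsupp.sum, Nat.cast_sum]
              push_cast
              rfl
      · rw [Finsupp.sum_mapRange_index (by simp)]
        rw [← hy3, Finsupp.sum, Finsupp.sum, Nat.cast_sum]
    have hle' : zLP ≤ (zstar : ℝ) := hLP.2 hmem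
    calc ⌈zLP⌉ ≤ ⌈((zstar : ℕ) : ℝ)⌉ := Int.ceil_le_ceil hle'
      _ = (zstar : ℤ) := Int.ceil_natCast zstar
  -- LP lower bounds
  obtain ⟨x, hx1, hx2, hx3, hx4⟩ := hLP.1
  have hz0 : 0 ≤ zLP := by
    rw [← hx4, Finsupp.sum]
    exact Finset.sum_nonneg fun a _ => hx2 a
  have hbound : ∀ T : Fin m,
      ((∑ k ∈ univ.filter (· ≤ T), q k * w k : ℕ) : ℝ) ≤ zLP * ((w T * (W / w T) : ℕ) : ℝ) := by
    intro T
    have hnat : ∀ a ∈ x.support, ∑ k ∈ univ.filter (· ≤ T), a k * w k ≤ w T * (W / w T) := by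
      intro a ha
      have hdvdS : w T ∣ ∑ k ∈ univ.filter (· ≤ T), a k * w k :=
        Finset.dvd_sum fun k hk => Dvd.dvd.mul_left (hchain k T (Finset.mem_filter.mp hk).2) _
      have hSW : ∑ k ∈ univ.filter (· ≤ T), a k * w k ≤ W :=
        le_trans (Finset.sum_le_sum_of_subset (Finset.filter_subset _ _)) (hx1 a ha)
      obtain ⟨s', hs'⟩ := hdvdS
      rw [hs']
      refine Nat.mul_le_mul_left _ ?_
      exact (Nat.le_div_iff_mul_le (hpos T)).mpr (by rw [mul_comm, ← hs']; exact hSW)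
    calc ((∑ k ∈ univ.filter (· ≤ T), q k * w k : ℕ) : ℝ)
        = ∑ k ∈ univ.filter (· ≤ T), (q k : ℝ) * (w k : ℝ) := by push_cast; rfl
      _ ≤ ∑ k ∈ univ.filter (· ≤ T), (x.sum fun a c => c * (a k : ℝ)) * (w k : ℝ) :=
          Finset.sum_le_sum fun k _ =>
            mul_le_mul_of_nonneg_right (hx3 k) (by positivity)
      _ = ∑ a ∈ x.support, x a * ∑ k ∈ univ.filter (· ≤ T), (a k : ℝ) * (w k : ℝ) := by
          simp only [Finsupp.sum, Finset.sum_mul]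
          rw [Finset.sum_comm]
          apply Finset.sum_congr rfl
          intro a _
          rw [Finset.mul_sum]
          apply Finset.sum_congr rfl
          intro k _
          ring
      _ ≤ ∑ a ∈ x.support, x a * ((w T * (W / w T) : ℕ) : ℝ) := by
          apply Finset.sum_le_sum
          intro a ha
          apply mul_le_mul_of_nonneg_left _ (hx2 a)
          calc ∑ k ∈ univ.filter (· ≤ T), (a k : ℝ) * (w k : ℝ)
              = ((∑ k ∈ univ.filter (· ≤ T), a k * w k : ℕ) : ℝ) := by push_cast; rfl
            _ ≤ ((w T * (W / w T) : ℕ) : ℝ) := by exact_mod_cast hnat a ha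
      _ = zLP * ((w T * (W / w T) : ℕ) : ℝ) := by
          rw [← Finset.sum_mul, ← hx4, Finsupp.sum]
  -- N bins suffice
  set N : ℕ := (⌈zLP⌉).toNat with hN
  have hNceil : ((N : ℤ)) = ⌈zLP⌉ := Int.toNat_of_nonneg (Int.ceil_nonneg hz0)
  have hNreal : zLP ≤ (N : ℝ) := by
    have h1 : zLP ≤ ((⌈zLP⌉ : ℤ) : ℝ) := Int.le_ceil zLP
    have h2 : ((⌈zLP⌉ : ℤ) : ℝ) = (N : ℝ) := by exact_mod_cast hNceil.symm
    linarith
  have hcap : ∀ t : Fin m, ∑ k ∈ univ.filter (· ≤ t), q k * w k ≤ N * (w t * (W / w t)) := by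
    intro t
    have h1 : ((∑ k ∈ univ.filter (· ≤ t), q k * w k : ℕ) : ℝ)
        ≤ (N : ℝ) * ((w t * (W / w t) : ℕ) : ℝ) :=
      le_trans (hbound t) (mul_le_mul_of_nonneg_right hNreal (by positivity))
    exact_mod_cast h1
  obtain ⟨A, hA1, hA2⟩ := pack m W N w q hpos hchain hcap
  -- build the integer solution with N bins
  have hdir2 : (zstar : ℤ) ≤ ⌈zLP⌉ := by
    rw [← hNceil]
    have hmem : N ∈ {n : ℕ | ∃ x : (Fin m → ℕ) →₀ ℕ,
        (∀ a ∈ x.support, ∑ j, a j * w j ≤ W) ∧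
        (∀ j, q j ≤ x.sum (fun a c => c * a j)) ∧
        x.sum (fun _ c => c) = n} := by
      refine ⟨∑ i : Fin N, Finsupp.single (A i) 1, ?_, ?_, ?_⟩
      · intro a ha
        have := Finsupp.support_finset_sum ha
        obtain ⟨i, _, hi⟩ := Finset.mem_biUnion.mp this
        have : a = A i := by
          have := Finsupp.support_single_subset hi
          simpa using this
        rw [this]
        exact hA1 i
      · intro j
        rw [← Finsupp.sum_finset_sum_index (by simp) (by intro a b c; ring)]
        have : ∑ i : Fin N, (Finsupp.single (A i) 1).sum (fun a c => c * a j)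
            = ∑ i : Fin N, A i j := by
          apply Finset.sum_congr rfl
          intro i _
          rw [Finsupp.sum_single_index (by simp)]
          ring
        rw [this, hA2 j]
      · rw [← Finsupp.sum_finset_sum_index (by simp) (by intro a b c; rfl)]
        have : ∑ i : Fin N, (Finsupp.single (A i) (1 : ℕ)).sum (fun _ c => c)
            = ∑ i : Fin N, 1 := by
          apply Finset.sum_congr rfl
          intro i _
          rw [Finsupp.sum_single_index rfl]
        rw [this]
        simp
    exact_mod_cast hInt.2 hmem
  omega
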